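/- Let (S, Σ) be a measurable space, {μ_n} a sequence of probability measures on S converging setwise to a probability measure μ, and {f_n} a sequence of measurable real-valued functions on S. Suppose there exists a sequence of measurable real-valued functions {g_n} on S with f_n(s) ≥ g_n(s) for all n and all s ∈ S such that −∞ < ∫_S limsup_{n→∞} g_n(s) μ(ds) ≤ liminf_{n→∞} ∫_S g_n(s) μ_n(ds). Then ∫_S liminf_{n→∞} f_n(s) μ(ds) ≤ liminf_{n→∞} ∫_S f_n(s) μ_n(ds), provided all integrals appearing are defined. -/

import Mathlib

open MeasureTheory Filter Metric Topology
open scoped ENNReal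
open scoped NNReal

/-- The positive part of an extended real, as a value in `ℝ≥0∞`. -/
noncomputable def EReal.posENN (x : EReal) : ℝ≥0∞ := (max x 0).abs

/-- The negative part of an extended real, as a value in `ℝ≥0∞`. -/
noncomputable def EReal.negENN (x : EReal) : ℝ≥0∞ := (max (-x) 0).abs

/-- The integral of an extended-real-valued function: `∫ f⁺ dμ − ∫ f⁻ dμ` (in `EReal`). -/
noncomputable def eIntegral {S : Type*} [MeasurableSpace S]
    (μ : Measure S) (f : S → EReal) : EReal :=
  ((∫⁻ s, (f s).posENN ∂μ : ℝ≥0∞) : EReal) - ((∫⁻ s, (f s).negENN ∂μ : ℝ≥0∞) : EReal)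

/-- The integral of `f` w.r.t. `μ` is defined: at least one of `∫ f⁺ dμ`, `∫ f⁻ dμ` is finite. -/
def IntegralDefined {S : Type*} [MeasurableSpace S] (μ : Measure S) (f : S → EReal) : Prop :=
  (∫⁻ s, (f s).posENN ∂μ) ≠ ⊤ ∨ (∫⁻ s, (f s).negENN ∂μ) ≠ ⊤

/-- `{μ_n}` converges setwise to `μ`: `μ_n(C) → μ(C)` for every measurable set `C`. -/
def SetwiseConv {S : Type*} [MeasurableSpace S] (μ : ℕ → Measure S) (ν : Measure S) : Prop :=
  ∀ C : Set S, MeasurableSet C → Tendsto (fun n => μ n C) atTop (𝓝 (ν C))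

namespace EReal

lemma coe_posENN (x : EReal) : (x.posENN : EReal) = max x 0 := by
  induction x using EReal.rec with
  | bot => simp [posENN, max_eq_right (bot_le : (⊥:EReal) ≤ 0)]
  | top => simp [posENN, max_eq_left (le_top : (0:EReal) ≤ ⊤)]
  | coe r =>
      rw [posENN]
      rw [show (max (r:EReal) 0) = ((max r 0 : ℝ) : EReal) by
        rw [← EReal.coe_zero, ← EReal.coe_strictMono.monotone.map_max]]
      rw [EReal.abs_def, EReal.coe_ennreal_ofReal, abs_of_nonneg (le_max_right r 0)]
      rw [show ((max (max r 0) 0 : ℝ) : EReal) = ((max r 0 : ℝ):EReal) by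
        rw [max_assoc, max_self]]

lemma coe_negENN (x : EReal) : (x.negENN : EReal) = max (-x) 0 := coe_posENN (-x)

lemma posENN_coe (r : ℝ) : ((r : EReal)).posENN = ENNReal.ofReal r := by
  apply EReal.coe_ennreal_injective
  rw [coe_posENN, EReal.coe_ennreal_ofReal, ← EReal.coe_zero,
    ← EReal.coe_strictMono.monotone.map_max]

lemma negENN_coe (r : ℝ) : ((r : EReal)).negENN = ENNReal.ofReal (-r) := by
  rw [negENN, ← EReal.coe_neg, ← posENN, posENN_coe]

lemma posENN_coe_ennreal (a : ℝ≥0∞) : ((a : EReal)).posENN = a := by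
  apply EReal.coe_ennreal_injective
  rw [coe_posENN, max_eq_left (EReal.coe_ennreal_nonneg a)]

lemma negENN_coe_ennreal (a : ℝ≥0∞) : ((a : EReal)).negENN = 0 := by
  apply EReal.coe_ennreal_injective
  rw [coe_negENN, EReal.coe_ennreal_zero, max_eq_right]
  rw [← neg_zero]; exact EReal.neg_le_neg_iff.2 (EReal.coe_ennreal_nonneg a)

lemma posENN_mono {x y : EReal} (h : x ≤ y) : x.posENN ≤ y.posENN := by
  rw [← EReal.coe_ennreal_le_coe_ennreal_iff, coe_posENN, coe_posENN]
  exact max_le_max h le_rfl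

lemma negENN_anti {x y : EReal} (h : x ≤ y) : y.negENN ≤ x.negENN :=
  posENN_mono (neg_le_neg_iff.2 h)

lemma negENN_eq_top_iff {x : EReal} : x.negENN = ⊤ ↔ x = ⊥ := by
  induction x using EReal.rec with
  | bot => simp [negENN]
  | top => simp [negENN, max_eq_right (bot_le : (⊥:EReal) ≤ 0), EReal.abs_zero]
  | coe r => simp [negENN_coe r, ENNReal.ofReal_ne_top]

lemma measurable_posENN : Measurable EReal.posENN := by
  apply EReal.measurable_of_measurable_real
  simp only [posENN_coe]
  exact ENNReal.measurable_ofReal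

lemma measurable_negENN : Measurable EReal.negENN := by
  have : EReal.negENN = EReal.posENN ∘ (fun x => -x) := by
    funext x; rfl
  rw [this]
  exact measurable_posENN.comp measurable_neg

lemma add_def (x y : EReal) :
    x + y = if x = ⊥ ∨ y = ⊥ then ⊥ else if x = ⊤ ∨ y = ⊤ then ⊤
      else ((x.toReal + y.toReal : ℝ) : EReal) := by
  induction x using EReal.rec with
  | bot => simp
  | top => induction y using EReal.rec <;> simp
  | coe r => induction y using EReal.rec <;> simp [← EReal.coe_add]

lemma _root_.Measurable.ereal_add {α : Type*} [MeasurableSpace α] {f g : α → EReal}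
    (hf : Measurable f) (hg : Measurable g) : Measurable (fun s => f s + g s) := by
  simp_rw [add_def]
  apply Measurable.ite
  · rw [Set.setOf_or]
    exact ((hf (measurableSet_singleton ⊥)).union (hg (measurableSet_singleton ⊥)))
  · exact measurable_const
  apply Measurable.ite
  · rw [Set.setOf_or]
    exact ((hf (measurableSet_singleton ⊤)).union (hg (measurableSet_singleton ⊤)))
  · exact measurable_const
  · exact (hf.ereal_toReal.add hg.ereal_toReal).coe_real_ereal

/-- key pointwise identity for additivity of the integral -/
lemma posENN_negENN_add_eq (a : ℝ≥0∞) (x : EReal) :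
    ((a : EReal) + x).posENN + x.negENN = ((a : EReal) + x).negENN + a + x.posENN := by
  induction x using EReal.rec with
  | bot =>
      simp [add_bot, negENN_eq_top_iff.2 rfl, posENN, negENN]
  | top =>
      rw [add_top_of_ne_bot (EReal.coe_ennreal_ne_bot a)]
      simp [posENN, negENN, max_eq_right (bot_le : (⊥:EReal) ≤ 0), EReal.abs_zero]
  | coe r =>
      induction a using ENNReal.recTopCoe with
      | top =>
          rw [show ((⊤:ℝ≥0∞):EReal) = (⊤:EReal) from rfl,
            top_add_of_ne_bot (EReal.coe_ne_bot r)]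
          simp [posENN, negENN, max_eq_right (bot_le : (⊥:EReal) ≤ 0), EReal.abs_zero,
            negENN_coe]
      | coe c =>
          rw [show (((c:ℝ≥0):ℝ≥0∞):EReal) = ((c:ℝ):EReal) from rfl, ← EReal.coe_add,
            posENN_coe, negENN_coe, posENN_coe, negENN_coe,
            show ((c:ℝ≥0):ℝ≥0∞) = ENNReal.ofReal (c:ℝ) by
              rw [ENNReal.ofReal_coe_nnreal]]
          have hc : (0:ℝ) ≤ c := c.2
          rcases le_total 0 r with h' | h'
          · rw [ENNReal.ofReal_eq_zero.2 (by linarith : -r ≤ 0),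
              ENNReal.ofReal_eq_zero.2 (by linarith : -((c:ℝ)+r) ≤ 0),
              ENNReal.ofReal_add hc h', zero_add, add_zero]
          rcases le_total 0 ((c:ℝ)+r) with h | h
          · rw [ENNReal.ofReal_eq_zero.2 (by linarith : -((c:ℝ)+r) ≤ 0),
              ENNReal.ofReal_eq_zero.2 (by linarith : r ≤ 0),
              ← ENNReal.ofReal_add h (by linarith : (0:ℝ) ≤ -r)]
            rw [zero_add, add_zero]
            congr 1; ring
          · rw [ENNReal.ofReal_eq_zero.2 h, ENNReal.ofReal_eq_zero.2 (by linarith : r ≤ 0),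
              zero_add, add_zero, ← ENNReal.ofReal_add (by linarith : (0:ℝ) ≤ -((c:ℝ)+r)) hc]
            congr 1; ring

end EReal

section Lemmas
variable {S : Type*} [MeasurableSpace S] {μ : Measure S}

lemma eIntegral_mono_ae {f g : S → EReal} (h : f ≤ᵐ[μ] g) :
    eIntegral μ f ≤ eIntegral μ g := by
  refine EReal.sub_le_sub ?_ ?_
  · exact EReal.coe_ennreal_le_coe_ennreal_iff.2 <|
      lintegral_mono_ae (h.mono fun s hs => EReal.posENN_mono hs)
  · exact EReal.coe_ennreal_le_coe_ennreal_iff.2 <|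
      lintegral_mono_ae (h.mono fun s hs => EReal.negENN_anti hs)

lemma eIntegral_coe_ennreal (φ : S → ℝ≥0∞) :
    eIntegral μ (fun s => (φ s : EReal)) = ((∫⁻ s, φ s ∂μ : ℝ≥0∞) : EReal) := by
  rw [eIntegral]
  simp only [EReal.posENN_coe_ennreal, EReal.negENN_coe_ennreal]
  rw [lintegral_const, zero_mul, EReal.coe_ennreal_zero, sub_zero]

lemma enn_coe_eq {x : ℝ≥0∞} (hx : x ≠ ⊤) : (x : EReal) = ((x.toReal : ℝ) : EReal) := by
  lift x to ℝ≥0 using hx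
  rw [EReal.coe_nnreal_eq_coe_real, ENNReal.coe_toReal]

private lemma ereal_arith (A B c d b : ℝ≥0∞) (hb : b ≠ ⊤) (hB : B ≠ ⊤)
    (hE : A + b = B + c + d) :
    (A : EReal) - B = (c : EReal) + ((d : EReal) - b) := by
  rcases eq_or_ne d ⊤ with hd | hd
  · have hA : A = ⊤ := by
      by_contra hA
      exact (ENNReal.add_ne_top.2 ⟨hA, hb⟩) (by rw [hE, hd]; simp)
    rw [hA, hd, enn_coe_eq hB, enn_coe_eq hb, EReal.coe_ennreal_top,
      EReal.top_sub_coe, EReal.top_sub_coe]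
    exact (EReal.add_top_of_ne_bot (EReal.coe_ennreal_ne_bot c)).symm
  rcases eq_or_ne c ⊤ with hc | hc
  · have hA : A = ⊤ := by
      by_contra hA
      exact (ENNReal.add_ne_top.2 ⟨hA, hb⟩) (by rw [hE, hc]; simp)
    rw [hA, hc, enn_coe_eq hB, enn_coe_eq hb, enn_coe_eq hd, EReal.coe_ennreal_top,
      EReal.top_sub_coe, ← EReal.coe_sub]
    exact (EReal.top_add_of_ne_bot (EReal.coe_ne_bot _)).symm
  · have hA : A ≠ ⊤ := by
      intro hA
      rw [hA, top_add] at hE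
      exact (ENNReal.add_ne_top.2 ⟨ENNReal.add_ne_top.2 ⟨hB, hc⟩, hd⟩) hE.symm
    have hE' : A.toReal + b.toReal = B.toReal + c.toReal + d.toReal := by
      have := congrArg ENNReal.toReal hE
      rwa [ENNReal.toReal_add hA hb, ENNReal.toReal_add (ENNReal.add_ne_top.2 ⟨hB, hc⟩) hd,
        ENNReal.toReal_add hB hc] at this
    rw [enn_coe_eq hA, enn_coe_eq hB, enn_coe_eq hb, enn_coe_eq hc, enn_coe_eq hd,
      ← EReal.coe_sub, ← EReal.coe_sub, ← EReal.coe_add, EReal.coe_eq_coe_iff]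
    linarith

lemma eIntegral_add_left (φ : S → ℝ≥0∞) (ψ : S → EReal)
    (hφ : Measurable φ) (hψ : Measurable ψ) (hψ' : (∫⁻ s, (ψ s).negENN ∂μ) ≠ ⊤) :
    eIntegral μ (fun s => (φ s : EReal) + ψ s)
      = ((∫⁻ s, φ s ∂μ : ℝ≥0∞) : EReal) + eIntegral μ ψ := by
  have hsum : Measurable (fun s => (φ s : EReal) + ψ s) :=
    Measurable.ereal_add (measurable_coe_ennreal_ereal.comp hφ) hψ
  have hBb : ∀ s, ((φ s : EReal) + ψ s).negENN ≤ (ψ s).negENN := by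
    intro s
    apply EReal.negENN_anti
    calc ψ s = 0 + ψ s := (zero_add _).symm
    _ ≤ (φ s : EReal) + ψ s := add_le_add_left (EReal.coe_ennreal_nonneg _) _
  have hB : (∫⁻ s, ((φ s : EReal) + ψ s).negENN ∂μ) ≤ ∫⁻ s, (ψ s).negENN ∂μ :=
    lintegral_mono fun s => hBb s
  have key : (∫⁻ s, ((φ s : EReal) + ψ s).posENN ∂μ) + ∫⁻ s, (ψ s).negENN ∂μ
      = (∫⁻ s, ((φ s : EReal) + ψ s).negENN ∂μ) + (∫⁻ s, φ s ∂μ) + ∫⁻ s, (ψ s).posENN ∂μ := by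
    have h1 : Measurable fun s => ((φ s : EReal) + ψ s).posENN :=
      EReal.measurable_posENN.comp hsum
    have h2 : Measurable fun s => ((φ s : EReal) + ψ s).negENN :=
      EReal.measurable_negENN.comp hsum
    rw [← lintegral_add_left h1, ← lintegral_add_left h2, ← lintegral_add_left (show Measurable fun s => ((φ s : EReal) + ψ s).negENN + φ s from h2.add hφ)]
    exact lintegral_congr fun s => EReal.posENN_negENN_add_eq (φ s) (ψ s)
  rw [eIntegral, eIntegral, add_comm ((_ : ℝ≥0∞) : EReal)]
  rw [ereal_arith _ _ _ _ _ hψ' (fun h => hψ' (top_le_iff.1 (h ▸ hB))) key]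
  rw [add_comm ((∫⁻ s, φ s ∂μ : ℝ≥0∞) : EReal)]

lemma lintegral_le_liminf_setwise {μ : ℕ → Measure S} {ν : Measure S}
    (hsw : SetwiseConv μ ν) {w : S → ℝ≥0∞} (hw : Measurable w) :
    ∫⁻ s, w s ∂ν ≤ liminf (fun n => ∫⁻ s, w s ∂(μ n)) atTop := by
  rw [lintegral_eq_iSup_eapprox_lintegral hw]
  refine iSup_le fun k => ?_
  set φ := SimpleFunc.eapprox w k with hφ
  have htd : Tendsto (fun n => φ.lintegral (μ n)) atTop (𝓝 (φ.lintegral ν)) := by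
    simp only [SimpleFunc.lintegral]
    apply tendsto_finset_sum
    intro x hx
    obtain ⟨a, ha⟩ := SimpleFunc.mem_range.1 hx
    refine ENNReal.Tendsto.const_mul (hsw _ (φ.measurableSet_preimage _)) (Or.inr ?_)
    rw [← ha]
    exact (SimpleFunc.eapprox_lt_top w k a).ne
  have h1 : φ.lintegral ν = liminf (fun n => φ.lintegral (μ n)) atTop := htd.liminf_eq.symm
  rw [h1]
  refine liminf_le_liminf (Eventually.of_forall fun n => ?_)
  rw [← SimpleFunc.lintegral_eq_lintegral]
  apply lintegral_mono
  intro a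
  calc φ a ≤ ⨆ m, SimpleFunc.eapprox w m a := le_iSup (fun m => SimpleFunc.eapprox w m a) k
  _ = w a := by rw [SimpleFunc.iSup_eapprox_apply hw]

lemma fatou_setwise {μ : ℕ → Measure S} {ν : Measure S} (hsw : SetwiseConv μ ν)
    (H : ℕ → S → ℝ≥0∞) (hH : ∀ n, Measurable (H n)) :
    ∫⁻ s, liminf (fun n => H n s) atTop ∂ν ≤ liminf (fun n => ∫⁻ s, H n s ∂(μ n)) atTop := by
  set w : ℕ → S → ℝ≥0∞ := fun k s => ⨅ i, ⨅ (_ : i ≥ k), H i s with hw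
  have hwm : ∀ k, Measurable (w k) :=
    fun k => Measurable.iInf fun i => Measurable.iInf fun _ => hH i
  have hmono : Monotone w := by
    intro k k' hk s
    exact le_iInf₂ fun i hi => iInf₂_le i (le_trans hk hi)
  have h1 : ∀ s, liminf (fun n => H n s) atTop = ⨆ k, w k s := by
    intro s; exact liminf_eq_iSup_iInf_of_nat
  calc ∫⁻ s, liminf (fun n => H n s) atTop ∂ν = ∫⁻ s, ⨆ k, w k s ∂ν :=
        lintegral_congr h1
  _ = ⨆ k, ∫⁻ s, w k s ∂ν := lintegral_iSup hwm (fun i j h s => hmono h s)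
  _ ≤ liminf (fun n => ∫⁻ s, H n s ∂(μ n)) atTop := by
      refine iSup_le fun k => (lintegral_le_liminf_setwise hsw (hwm k)).trans ?_
      refine liminf_le_liminf ?_
      filter_upwards [eventually_ge_atTop k] with n hn
      exact lintegral_mono fun s => iInf₂_le n hn

lemma liminf_coe_ennreal (x : ℕ → ℝ≥0∞) :
    liminf (fun n => ((x n : ℝ≥0∞) : EReal)) atTop = ((liminf x atTop : ℝ≥0∞) : EReal) := by
  exact (Monotone.map_liminf_of_continuousAt
    (fun a b h => EReal.coe_ennreal_le_coe_ennreal_iff.2 h) x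
    (continuous_coe_ennreal_ereal.continuousAt)).symm

end Lemmas

/-- Fatou's lemma for setwise converging probabilities
(Feinberg–Kasyanov–Zgurovsky, Theorem 4.1 of FKZTVP). -/
theorem fatou_setwise_prob {S : Type*} [MeasurableSpace S]
    (μ : ℕ → Measure S) (ν : Measure S)
    (hμ : ∀ n, IsProbabilityMeasure (μ n)) (hν : IsProbabilityMeasure ν)
    (hsw : SetwiseConv μ ν)
    (f : ℕ → S → ℝ) (hf : ∀ n, Measurable (f n))
    (g : ℕ → S → ℝ) (hg : ∀ n, Measurable (g n))
    (hfg : ∀ n s, g n s ≤ f n s)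
    (hgbd : (⊥ : EReal) < eIntegral ν (fun s => limsup (fun n => ((g n s : ℝ) : EReal)) atTop))
    (hgle : eIntegral ν (fun s => limsup (fun n => ((g n s : ℝ) : EReal)) atTop)
      ≤ liminf (fun n => eIntegral (μ n) (fun s => ((g n s : ℝ) : EReal))) atTop)
    (hdef : ∀ n, IntegralDefined (μ n) (fun s => ((f n s : ℝ) : EReal)))
    (hdef' : IntegralDefined ν (fun s => liminf (fun n => ((f n s : ℝ) : EReal)) atTop))
    (hdefg : ∀ n, IntegralDefined (μ n) (fun s => ((g n s : ℝ) : EReal)))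
    (hdefg' : IntegralDefined ν (fun s => limsup (fun n => ((g n s : ℝ) : EReal)) atTop)) :
    eIntegral ν (fun s => liminf (fun n => ((f n s : ℝ) : EReal)) atTop)
      ≤ liminf (fun n => eIntegral (μ n) (fun s => ((f n s : ℝ) : EReal))) atTop := by
  classical
  set H : ℕ → S → ℝ≥0∞ := fun n s => ENNReal.ofReal (f n s - g n s) with hH
  have hHm : ∀ n, Measurable (H n) := fun n => ((hf n).sub (hg n)).ennreal_ofReal
  set Lg : S → EReal := fun s => limsup (fun n => ((g n s : ℝ) : EReal)) atTop with hLg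
  have hLgm : Measurable Lg := Measurable.limsup fun n => (hg n).coe_real_ereal
  set HH : S → ℝ≥0∞ := fun s => liminf (fun n => H n s) atTop with hHH
  have hHHm : Measurable HH := Measurable.liminf hHm
  -- f = H + g pointwise in EReal
  have hfe : ∀ n s, ((f n s : ℝ) : EReal) = ((H n s : ℝ≥0∞) : EReal) + ((g n s : ℝ) : EReal) := by
    intro n s
    rw [hH]
    rw [EReal.coe_ennreal_ofReal,
      max_eq_left (by linarith [hfg n s] : (0:ℝ) ≤ f n s - g n s)]
    rw [← EReal.coe_add, EReal.coe_eq_coe_iff]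
    ring
  -- the g-limsup has finite negative part
  have hgneg : (∫⁻ s, (Lg s).negENN ∂ν) ≠ ⊤ := by
    intro htop
    rw [eIntegral, htop, EReal.coe_ennreal_top, EReal.sub_top] at hgbd
    exact (lt_irrefl _ hgbd)
  have haeLg : ∀ᵐ s ∂ν, Lg s ≠ ⊥ := by
    have hm : Measurable fun s => (Lg s).negENN := EReal.measurable_negENN.comp hLgm
    filter_upwards [ae_lt_top hm hgneg] with s hs
    intro hbot
    rw [hbot, EReal.negENN_eq_top_iff.2 rfl] at hs
    exact lt_irrefl _ hs
  -- pointwise comparison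
  have hptwise : ∀ᵐ s ∂ν, liminf (fun n => ((f n s : ℝ) : EReal)) atTop
      ≤ (HH s : EReal) + Lg s := by
    filter_upwards [haeLg] with s hs
    have c2 : liminf (fun n => ((H n s : ℝ≥0∞) : EReal)) atTop ≠ ⊥ := by
      rw [liminf_coe_ennreal]; exact EReal.coe_ennreal_ne_bot _
    calc liminf (fun n => ((f n s : ℝ) : EReal)) atTop
        = liminf ((fun n => ((g n s : ℝ) : EReal))
            + (fun n => ((H n s : ℝ≥0∞) : EReal))) atTop := by
          apply congrArg (fun u => liminf u atTop)
          funext n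
          rw [Pi.add_apply, hfe n s, add_comm]
      _ ≤ limsup (fun n => ((g n s : ℝ) : EReal)) atTop
            + liminf (fun n => ((H n s : ℝ≥0∞) : EReal)) atTop :=
          EReal.liminf_add_le (Or.inl hs) (Or.inr c2)
      _ = (HH s : EReal) + Lg s := by rw [liminf_coe_ennreal, add_comm]
  calc eIntegral ν (fun s => liminf (fun n => ((f n s : ℝ) : EReal)) atTop)
      ≤ eIntegral ν (fun s => (HH s : EReal) + Lg s) := eIntegral_mono_ae hptwise
    _ = ((∫⁻ s, HH s ∂ν : ℝ≥0∞) : EReal) + eIntegral ν Lg :=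
        eIntegral_add_left HH Lg hHHm hLgm hgneg
    _ ≤ liminf (fun n => ((∫⁻ s, H n s ∂(μ n) : ℝ≥0∞) : EReal)) atTop
        + liminf (fun n => eIntegral (μ n) (fun s => ((g n s : ℝ) : EReal))) atTop := by
        apply add_le_add _ hgle
        rw [liminf_coe_ennreal]
        exact EReal.coe_ennreal_le_coe_ennreal_iff.2 (fatou_setwise hsw H hHm)
    _ ≤ liminf ((fun n => ((∫⁻ s, H n s ∂(μ n) : ℝ≥0∞) : EReal))
          + (fun n => eIntegral (μ n) (fun s => ((g n s : ℝ) : EReal)))) atTop :=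
        EReal.le_liminf_add
    _ ≤ liminf (fun n => eIntegral (μ n) (fun s => ((f n s : ℝ) : EReal))) atTop := by
        refine liminf_le_liminf ?_
        have hev : ∀ᶠ n in atTop, (⊥ : EReal)
            < eIntegral (μ n) (fun s => ((g n s : ℝ) : EReal)) :=
          eventually_lt_of_lt_liminf (hgbd.trans_le hgle)
        filter_upwards [hev] with n hn
        have hneg : (∫⁻ s, (((g n s : ℝ) : EReal)).negENN ∂(μ n)) ≠ ⊤ := by
          intro htop
          rw [eIntegral, htop, EReal.coe_ennreal_top, EReal.sub_top] at hn
          exact lt_irrefl _ hn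
        have := eIntegral_add_left (μ := μ n) (H n) (fun s => ((g n s : ℝ) : EReal))
          (hHm n) ((hg n).coe_real_ereal) hneg
        rw [Pi.add_apply, ← this]
        apply le_of_eq
        apply congrArg (eIntegral (μ n))
        funext s
        exact (hfe n s).symm
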